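/- arXiv:2104.08046 — 2 statements merged into one kernel-verified Lean document; each statement's English description precedes it below -/
import Mathlib

section
/- Quadratic bound for sliding (Theorem 'sliding', abstract version): let f be C¹, y ∈ X₀ with X₀ convex and bounded, f(y) ≠ 0, B invertible with first column f(y), A = B⁻¹. Suppose Δt ⊆ ℝ is an interval with diam(Δt) ≤ K·diam(X₀) and Δt ⊆ [-K·diam(X₀), K·diam(X₀)] for a constant K. Then for every x ∈ X₀ and t ∈ Δt, the components 2,…,n of A f(x) t are bounded in absolute value by C·diam(X₀)² for some constant C depending only on f, A, K and a bound on X₀. -/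
/-- Quadratic sliding bound (abstract version of the sliding theorem): if `Δt` has
diameter `O(diam X₀)` and is contained in `[-K diam X₀, K diam X₀]`, then for `x ∈ X₀`
and `t ∈ Δt` the components `2,…,n` of `A f(x)·t` are `O(diam(X₀)²)`. -/
theorem quadratic_sliding_bound {n : ℕ} [NeZero n]
    (f : (Fin n → ℝ) → (Fin n → ℝ)) (hf : ContDiff ℝ 1 f)
    (X₀ : Set (Fin n → ℝ)) (hconv : Convex ℝ X₀) (hbdd : Bornology.IsBounded X₀)
    (y : Fin n → ℝ) (hy : y ∈ X₀) (hfy : f y ≠ 0)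
    (B : Matrix (Fin n) (Fin n) ℝ) (hB : IsUnit B)
    (hcol : ∀ i, B i 0 = f y i)
    (A : Matrix (Fin n) (Fin n) ℝ) (hA : A = B⁻¹)
    (Δt : Set ℝ) (K : ℝ) (hK : 0 < K)
    (hΔdiam : Metric.diam Δt ≤ K * Metric.diam X₀)
    (hΔsub : Δt ⊆ Set.Icc (-(K * Metric.diam X₀)) (K * Metric.diam X₀)) :
    ∃ C > 0, ∀ x ∈ X₀, ∀ t ∈ Δt, ∀ i : Fin n, i ≠ 0 →
      |t * A.mulVec (f x) i| ≤ C * Metric.diam X₀ ^ 2 := by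
  -- A f(y) = e₀
  have hfyB : f y = B.mulVec (Pi.single 0 1) := by
    funext i
    simp [Matrix.mulVec_single, hcol i]
  have hAfy : A.mulVec (f y) = Pi.single 0 1 := by
    rw [hfyB, hA, Matrix.mulVec_mulVec,
      Matrix.nonsing_inv_mul B ((Matrix.isUnit_iff_isUnit_det B).mp hB), Matrix.one_mulVec]
  -- Lipschitz bound for f on X₀
  have hXc : IsCompact (closure X₀) := hbdd.isCompact_closure
  obtain ⟨M, hM⟩ : ∃ M : ℝ, ∀ z ∈ closure X₀, ‖fderiv ℝ f z‖ ≤ M := by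
    rcases hXc.exists_bound_of_continuousOn
      ((hf.continuous_fderiv one_ne_zero).continuousOn) with ⟨M, hM⟩
    exact ⟨M, hM⟩
  have hM0 : 0 ≤ M := by
    rcases Set.eq_empty_or_nonempty (closure X₀) with h | ⟨z, hz⟩
    · exact absurd (subset_closure hy) (h ▸ Set.notMem_empty y)
    · exact le_trans (norm_nonneg _) (hM z hz)
  have hlip : ∀ x ∈ X₀, ‖f x - f y‖ ≤ M * Metric.diam X₀ := by
    intro x hx
    have := Convex.norm_image_sub_le_of_norm_fderiv_le
      (f := f) (s := closure X₀)
      (fun z _ => hf.differentiable one_ne_zero z) hM hconv.closure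
      (subset_closure hy) (subset_closure hx)
    refine this.trans ?_
    have : ‖x - y‖ ≤ Metric.diam X₀ := by
      rw [← dist_eq_norm]
      exact Metric.dist_le_diam_of_mem hbdd hx hy
    nlinarith [norm_nonneg (x - y)]
  -- matrix row bound
  set R : ℝ := (∑ i, ∑ j, |A i j|) + 1 with hR
  have hR0 : 0 < R := by
    have : (0:ℝ) ≤ ∑ i, ∑ j, |A i j| :=
      Finset.sum_nonneg fun i _ => Finset.sum_nonneg fun j _ => abs_nonneg _
    linarith
  have hrow : ∀ (v : Fin n → ℝ) (i : Fin n), |A.mulVec v i| ≤ R * ‖v‖ := by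
    intro v i
    have h1 : |A.mulVec v i| ≤ ∑ j, |A i j| * ‖v‖ := by
      rw [Matrix.mulVec, dotProduct]
      refine (Finset.abs_sum_le_sum_abs _ _).trans ?_
      refine Finset.sum_le_sum fun j _ => ?_
      rw [abs_mul]
      have := norm_le_pi_norm v j
      simp only [Real.norm_eq_abs] at this
      exact mul_le_mul_of_nonneg_left this (abs_nonneg _)
    have h2 : (∑ j, |A i j| * ‖v‖) ≤ R * ‖v‖ := by
      rw [← Finset.sum_mul]
      refine mul_le_mul_of_nonneg_right ?_ (norm_nonneg v)
      have hle : (∑ j, |A i j|) ≤ ∑ i, ∑ j, |A i j| :=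
        Finset.single_le_sum (f := fun i => ∑ j, |A i j|)
          (fun i _ => Finset.sum_nonneg fun j _ => abs_nonneg _) (Finset.mem_univ i)
      linarith
    exact h1.trans h2
  set D := Metric.diam X₀ with hD
  have hD0 : 0 ≤ D := Metric.diam_nonneg
  refine ⟨K * R * M + 1, by positivity, fun x hx t ht i hi => ?_⟩
  have htb : |t| ≤ K * D := by
    rcases hΔsub ht with ⟨h1, h2⟩
    exact abs_le.mpr ⟨by linarith, h2⟩
  have hAfx : A.mulVec (f x) i = A.mulVec (f x - f y) i := by
    have : A.mulVec (f x - f y) = A.mulVec (f x) - A.mulVec (f y) := by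
      simp [Matrix.mulVec_sub]
    rw [this]
    have : A.mulVec (f y) i = 0 := by
      rw [hAfy]; exact Pi.single_eq_of_ne hi 1
    simp [this]
  have hb : |A.mulVec (f x) i| ≤ R * (M * D) := by
    rw [hAfx]
    exact (hrow _ i).trans (mul_le_mul_of_nonneg_left (hlip x hx) hR0.le)
  calc |t * A.mulVec (f x) i| = |t| * |A.mulVec (f x) i| := abs_mul _ _
    _ ≤ (K * D) * (R * (M * D)) := by
        exact mul_le_mul htb hb (abs_nonneg _) (by positivity)
    _ ≤ (K * R * M + 1) * D ^ 2 := by nlinarith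
end

section
/- Transversality gives a local graph structure for the crossing time: if f is C¹, α is C¹ with α(x₀) = 0 and ⟨Dα(x₀), f(x₀)⟩ ≠ 0, and φ(T, x₀) ∈ α⁻¹(0) with ⟨Dα(φ(T,x₀)), f(φ(T,x₀))⟩ ≠ 0, then there exist a neighborhood U of x₀ and a unique C¹ function t_Π : U → ℝ with t_Π(x₀) = T and α(φ(t_Π(x), x)) = 0 for all x ∈ U. -/
open scoped Topology

/-- Transversality gives a local graph structure for the crossing time: near a transversal
crossing there is a unique C¹ return-time function `t_Π` with `t_Π x₀ = T` and
`α(φ(t_Π(x),x)) = 0`. -/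
theorem crossing_time_implicit_function {n : ℕ}
    (f : (Fin n → ℝ) → (Fin n → ℝ)) (hf : ContDiff ℝ 1 f)
    (φ : ℝ → (Fin n → ℝ) → (Fin n → ℝ))
    (hsmooth : ContDiff ℝ 1 (fun p : ℝ × (Fin n → ℝ) => φ p.1 p.2))
    (hflow : ∀ t x, HasDerivAt (fun τ => φ τ x) (f (φ t x)) t)
    (hinit : ∀ x, φ 0 x = x)
    (α : (Fin n → ℝ) → ℝ) (hα : ContDiff ℝ 1 α)
    (x₀ : Fin n → ℝ) (hαx₀ : α x₀ = 0)
    (T : ℝ) (hcross : α (φ T x₀) = 0)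
    (htrans₀ : fderiv ℝ α x₀ (f x₀) ≠ 0)
    (htransT : fderiv ℝ α (φ T x₀) (f (φ T x₀)) ≠ 0) :
    ∃ U ∈ 𝓝 x₀, ∃ tPi : (Fin n → ℝ) → ℝ,
      ContDiffOn ℝ 1 tPi U ∧ tPi x₀ = T ∧ (∀ x ∈ U, α (φ (tPi x) x) = 0) ∧
      ∀ s : (Fin n → ℝ) → ℝ, ContinuousOn s U → s x₀ = T →
        (∀ x ∈ U, α (φ (s x) x) = 0) → ∀ᶠ x in 𝓝 x₀, s x = tPi x := by
  classical
  -- The map G(t,x) = (α(φ(t,x)), x)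
  set F : ℝ × (Fin n → ℝ) → ℝ := fun p => α (φ p.1 p.2) with hFdef
  have hF : ContDiff ℝ 1 F := hα.comp hsmooth
  set G : ℝ × (Fin n → ℝ) → ℝ × (Fin n → ℝ) := fun p => (F p, p.2) with hGdef
  have hG : ContDiff ℝ 1 G := hF.prodMk contDiff_snd
  -- derivative data
  set a : ℝ := fderiv ℝ α (φ T x₀) (f (φ T x₀)) with hadef
  set A : (ℝ × (Fin n → ℝ)) →L[ℝ] ℝ := fderiv ℝ F (T, x₀) with hAdef
  have hFdiff : DifferentiableAt ℝ F (T, x₀) := (hF.differentiable one_ne_zero) _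
  have hFA : HasFDerivAt F A (T, x₀) := hFdiff.hasFDerivAt
  -- A (1, 0) = a
  have hA10 : A (1, (0 : Fin n → ℝ)) = a := by
    have h1 : HasDerivAt (fun t : ℝ => α (φ t x₀)) a T :=
      ((hα.differentiable one_ne_zero) (φ T x₀)).hasFDerivAt.comp_hasDerivAt T (hflow T x₀)
    have h2 : HasDerivAt (fun t : ℝ => (t, x₀)) ((1 : ℝ), (0 : Fin n → ℝ)) T :=
      (hasDerivAt_id T).prodMk (hasDerivAt_const T x₀)
    have h3 : HasDerivAt (fun t : ℝ => F (t, x₀)) (A (1, (0 : Fin n → ℝ))) T :=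
      by have := hFA.comp_hasDerivAt T h2; exact this
    exact h3.unique h1
  have ha : a ≠ 0 := htransT
  -- decomposition A (t, x) = t * a + L x
  set L : (Fin n → ℝ) →L[ℝ] ℝ := A.comp (ContinuousLinearMap.inr ℝ ℝ (Fin n → ℝ)) with hLdef
  have hAsplit : ∀ (t : ℝ) (x : Fin n → ℝ), A (t, x) = t * a + L x := by
    intro t x
    have : (t, x) = t • ((1 : ℝ), (0 : Fin n → ℝ)) + ((0 : ℝ), x) := by
      simp [Prod.ext_iff]
    rw [this, map_add, map_smul, hA10]
    simp [L, smul_eq_mul]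
  -- the continuous linear equivalence B
  set Bfwd : (ℝ × (Fin n → ℝ)) →L[ℝ] (ℝ × (Fin n → ℝ)) :=
    A.prod (ContinuousLinearMap.snd ℝ ℝ (Fin n → ℝ)) with hBfdef
  set Binv : (ℝ × (Fin n → ℝ)) →L[ℝ] (ℝ × (Fin n → ℝ)) :=
    (a⁻¹ • ContinuousLinearMap.fst ℝ ℝ (Fin n → ℝ)
      - a⁻¹ • L.comp (ContinuousLinearMap.snd ℝ ℝ (Fin n → ℝ))).prod
      (ContinuousLinearMap.snd ℝ ℝ (Fin n → ℝ)) with hBidef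
  have hleft : Function.LeftInverse Binv Bfwd := by
    intro p
    obtain ⟨t, x⟩ := p
    simp only [Bfwd, Binv, ContinuousLinearMap.prod_apply, ContinuousLinearMap.coe_snd',
      ContinuousLinearMap.coe_sub', Pi.sub_apply, ContinuousLinearMap.coe_smul', Pi.smul_apply,
      ContinuousLinearMap.coe_fst', ContinuousLinearMap.coe_comp', Function.comp_apply]
    refine Prod.ext ?_ rfl
    simp only [hAsplit t x, smul_eq_mul]
    field_simp
    ring
  have hright : Function.RightInverse Binv Bfwd := by
    intro p
    obtain ⟨u, x⟩ := p
    simp only [Bfwd, Binv, ContinuousLinearMap.prod_apply, ContinuousLinearMap.coe_snd',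
      ContinuousLinearMap.coe_sub', Pi.sub_apply, ContinuousLinearMap.coe_smul', Pi.smul_apply,
      ContinuousLinearMap.coe_fst', ContinuousLinearMap.coe_comp', Function.comp_apply]
    refine Prod.ext ?_ rfl
    rw [hAsplit]
    simp only [smul_eq_mul]
    field_simp
    ring
  set B : (ℝ × (Fin n → ℝ)) ≃L[ℝ] (ℝ × (Fin n → ℝ)) :=
    ContinuousLinearEquiv.equivOfInverse Bfwd Binv hleft hright with hBdef
  have hGA : HasFDerivAt G (B : (ℝ × (Fin n → ℝ)) →L[ℝ] (ℝ × (Fin n → ℝ))) (T, x₀) :=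
    hFA.prodMk (hasFDerivAt_snd)
  have hGat : ContDiffAt ℝ 1 G (T, x₀) := hG.contDiffAt
  -- the local inverse
  set g : ℝ × (Fin n → ℝ) → ℝ × (Fin n → ℝ) := hGat.localInverse hGA one_ne_zero with hgdef
  have hGTx₀ : G (T, x₀) = ((0 : ℝ), x₀) := by
    simp [G, F, hcross]
  have hgimg : g (G (T, x₀)) = (T, x₀) := hGat.localInverse_apply_image hGA one_ne_zero
  have hgC : ContDiffAt ℝ 1 g ((0 : ℝ), x₀) := by
    have := hGat.to_localInverse (f' := B) hGA one_ne_zero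
    rwa [hGTx₀] at this
  have hstrict : HasStrictFDerivAt G (B : (ℝ × (Fin n → ℝ)) →L[ℝ] (ℝ × (Fin n → ℝ))) (T, x₀) :=
    hGat.hasStrictFDerivAt' hGA one_ne_zero
  have hlefti : ∀ᶠ p in 𝓝 ((T : ℝ), x₀), g (G p) = p := hstrict.eventually_left_inverse
  have hrighti : ∀ᶠ q in 𝓝 (((0 : ℝ), x₀) : ℝ × (Fin n → ℝ)), G (g q) = q := by
    have := hstrict.eventually_right_inverse
    rwa [hGTx₀] at this
  -- define tPi
  set tPi : (Fin n → ℝ) → ℝ := fun x => (g (0, x)).1 with htPidef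
  have htend : Filter.Tendsto (fun x : Fin n → ℝ => ((0 : ℝ), x)) (𝓝 x₀)
      (𝓝 ((0 : ℝ), x₀)) := by
    exact (continuous_const.prodMk continuous_id).continuousAt
  have hev : ∀ᶠ x in 𝓝 x₀, G (g (0, x)) = ((0 : ℝ), x) := htend.eventually hrighti
  have hzero : ∀ᶠ x in 𝓝 x₀, α (φ (tPi x) x) = 0 := by
    filter_upwards [hev] with x hx
    have h2 : (g ((0 : ℝ), x)).2 = x := congrArg Prod.snd hx
    have h1 : F (g ((0 : ℝ), x)) = 0 := congrArg Prod.fst hx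
    simpa [F, tPi, h2] using h1
  have htPiC : ContDiffAt ℝ 1 tPi x₀ := by
    have hg0 : ContDiffAt ℝ 1 (fun x : Fin n → ℝ => g ((0 : ℝ), x)) x₀ :=
      hgC.comp x₀ ((contDiff_const.prodMk contDiff_id).contDiffAt)
    exact contDiffAt_fst.comp x₀ hg0
  obtain ⟨V, hV, hVC⟩ := htPiC.contDiffOn le_rfl (by simp)
  refine ⟨V ∩ {x | α (φ (tPi x) x) = 0}, Filter.inter_mem hV hzero, tPi, ?_, ?_, ?_, ?_⟩
  · exact hVC.mono Set.inter_subset_left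
  · have h : g ((0 : ℝ), x₀) = (T, x₀) := by rw [← hGTx₀]; exact hgimg
    simp [tPi, h]
  · exact fun x hx => hx.2
  · intro s hsc hs0 hszero
    have hU : V ∩ {x | α (φ (tPi x) x) = 0} ∈ 𝓝 x₀ := Filter.inter_mem hV hzero
    have hsct : ContinuousAt s x₀ := hsc.continuousAt hU
    have hc2 : ContinuousAt (fun x : Fin n → ℝ => (s x, x)) x₀ :=
      hsct.prodMk continuousAt_id
    have htend2 : Filter.Tendsto (fun x : Fin n → ℝ => (s x, x)) (𝓝 x₀)
        (𝓝 ((T : ℝ), x₀)) := by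
      have := hc2.tendsto
      simpa [hs0] using this
    have hev2 : ∀ᶠ x in 𝓝 x₀, g (G (s x, x)) = (s x, x) := htend2.eventually hlefti
    have hUe : ∀ᶠ x in 𝓝 x₀, x ∈ V ∩ {x | α (φ (tPi x) x) = 0} := hU
    filter_upwards [hev2, hUe] with x hx hxU
    have hGx : G (s x, x) = ((0 : ℝ), x) := by
      simp [G, F, hszero x hxU]
    rw [hGx] at hx
    exact (congrArg Prod.fst hx).symm
end
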